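/- Let H be formed from disjoint connected graphs G₀, G₁, G₂ with u, v ∈ V(G₀) satisfying N_{G₀}(u)\{v} = N_{G₀}(v)\{u}, by identifying u with a vertex w₁ of G₁ and v with a vertex w₂ of G₂; let H₁ be formed by instead identifying u, w₁, and w₂ into a single vertex. If G₁ and G₂ each have at least 2 vertices, then RDD(H₁) > RDD(H). -/

import Mathlib

open Finset

open Classical in
/-- Reciprocal degree distance. -/
noncomputable def RDD {V : Type*} [Fintype V] (G : SimpleGraph V) : ℝ :=
  (∑ u : V, ∑ v : V, if u ≠ v then
      (((G.neighborSet u).ncard : ℝ) + ((G.neighborSet v).ncard : ℝ)) / (G.dist u v : ℝ)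
    else 0) / 2

/-- Glue: attach `G₁` (at `w₁`) to the vertex `p` of `G₀` and `G₂` (at `w₂`) to
the vertex `q` of `G₀`, identifying `w₁` with `p` and `w₂` with `q`. -/
def glue {V₀ V₁ V₂ : Type*} (G₀ : SimpleGraph V₀) (G₁ : SimpleGraph V₁)
    (G₂ : SimpleGraph V₂) (p q : V₀) (w₁ : V₁) (w₂ : V₂) :
    SimpleGraph (V₀ ⊕ ({x : V₁ // x ≠ w₁} ⊕ {x : V₂ // x ≠ w₂})) :=
  SimpleGraph.fromRel (fun a b =>
    match a, b with
    | Sum.inl a, Sum.inl b => G₀.Adj a b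
    | Sum.inr (Sum.inl a), Sum.inr (Sum.inl b) => G₁.Adj a.val b.val
    | Sum.inr (Sum.inr a), Sum.inr (Sum.inr b) => G₂.Adj a.val b.val
    | Sum.inl a, Sum.inr (Sum.inl b) => a = p ∧ G₁.Adj w₁ b.val
    | Sum.inl a, Sum.inr (Sum.inr b) => a = q ∧ G₂.Adj w₂ b.val
    | _, _ => False)

section GlueBasics

variable {V₀ V₁ V₂ : Type*} {G₀ : SimpleGraph V₀} {G₁ : SimpleGraph V₁}
  {G₂ : SimpleGraph V₂} {p q : V₀} {w₁ : V₁} {w₂ : V₂}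

@[simp] lemma glue_adj_inl_inl {a b : V₀} :
    (glue G₀ G₁ G₂ p q w₁ w₂).Adj (.inl a) (.inl b) ↔ G₀.Adj a b := by
  constructor
  · rintro ⟨hne, h | h⟩
    · exact h
    · exact h.symm
  · intro h
    exact ⟨by simpa using h.ne, Or.inl h⟩

@[simp] lemma glue_adj_in1_in1 {a b : {x : V₁ // x ≠ w₁}} :
    (glue G₀ G₁ G₂ p q w₁ w₂).Adj (.inr (.inl a)) (.inr (.inl b)) ↔ G₁.Adj a.val b.val := by
  constructor
  · rintro ⟨hne, h | h⟩
    · exact h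
    · exact h.symm
  · intro h
    refine ⟨?_, Or.inl h⟩
    simp only [ne_eq, Sum.inr.injEq, Sum.inl.injEq]
    exact fun hh => h.ne (congrArg Subtype.val hh)

@[simp] lemma glue_adj_in2_in2 {a b : {x : V₂ // x ≠ w₂}} :
    (glue G₀ G₁ G₂ p q w₁ w₂).Adj (.inr (.inr a)) (.inr (.inr b)) ↔ G₂.Adj a.val b.val := by
  constructor
  · rintro ⟨hne, h | h⟩
    · exact h
    · exact h.symm
  · intro h
    refine ⟨?_, Or.inl h⟩
    simp only [ne_eq, Sum.inr.injEq, Sum.inr.injEq]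
    exact fun hh => h.ne (congrArg Subtype.val hh)

@[simp] lemma glue_adj_inl_in1 {a : V₀} {b : {x : V₁ // x ≠ w₁}} :
    (glue G₀ G₁ G₂ p q w₁ w₂).Adj (.inl a) (.inr (.inl b)) ↔ a = p ∧ G₁.Adj w₁ b.val := by
  constructor
  · rintro ⟨hne, h | h⟩
    · exact h
    · exact h.elim
  · intro h
    exact ⟨by simp, Or.inl h⟩

@[simp] lemma glue_adj_inl_in2 {a : V₀} {b : {x : V₂ // x ≠ w₂}} :
    (glue G₀ G₁ G₂ p q w₁ w₂).Adj (.inl a) (.inr (.inr b)) ↔ a = q ∧ G₂.Adj w₂ b.val := by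
  constructor
  · rintro ⟨hne, h | h⟩
    · exact h
    · exact h.elim
  · intro h
    exact ⟨by simp, Or.inl h⟩

@[simp] lemma glue_adj_in1_in2 {a : {x : V₁ // x ≠ w₁}} {b : {x : V₂ // x ≠ w₂}} :
    ¬ (glue G₀ G₁ G₂ p q w₁ w₂).Adj (.inr (.inl a)) (.inr (.inr b)) := by
  rintro ⟨hne, h | h⟩ <;> exact h

end GlueBasics

open Classical in
/-- embedding of `V₁` into the glued vertex set. -/
noncomputable def embV₁ {V₀ V₁ V₂ : Type*} (p : V₀) (w₁ : V₁) (w₂ : V₂) (x : V₁) :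
    V₀ ⊕ ({x : V₁ // x ≠ w₁} ⊕ {x : V₂ // x ≠ w₂}) :=
  if h : x = w₁ then .inl p else .inr (.inl ⟨x, h⟩)

open Classical in
noncomputable def embV₂ {V₀ V₁ V₂ : Type*} (q : V₀) (w₁ : V₁) (w₂ : V₂) (x : V₂) :
    V₀ ⊕ ({x : V₁ // x ≠ w₁} ⊕ {x : V₂ // x ≠ w₂}) :=
  if h : x = w₂ then .inl q else .inr (.inr ⟨x, h⟩)

section GlueDist

variable {V₀ V₁ V₂ : Type*} {G₀ : SimpleGraph V₀} {G₁ : SimpleGraph V₁}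
  {G₂ : SimpleGraph V₂} {p q : V₀} {w₁ : V₁} {w₂ : V₂}

lemma embV₁_inj : Function.Injective (embV₁ (V₂ := V₂) p w₁ w₂) := by
  intro x y h
  simp only [embV₁] at h
  by_cases h1 : x = w₁
  · by_cases h2 : y = w₁
    · rw [h1, h2]
    · rw [dif_pos h1, dif_neg h2] at h; simp at h
  · by_cases h2 : y = w₁
    · rw [dif_neg h1, dif_pos h2] at h; simp at h
    · rw [dif_neg h1, dif_neg h2] at h; simpa using h

lemma embV₂_inj : Function.Injective (embV₂ (V₁ := V₁) q w₁ w₂) := by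
  intro x y h
  simp only [embV₂] at h
  by_cases h1 : x = w₂
  · by_cases h2 : y = w₂
    · rw [h1, h2]
    · rw [dif_pos h1, dif_neg h2] at h; simp at h
  · by_cases h2 : y = w₂
    · rw [dif_neg h1, dif_pos h2] at h; simp at h
    · rw [dif_neg h1, dif_neg h2] at h; simpa using h

@[simp] lemma embV₁_w₁ : embV₁ (V₂ := V₂) p w₁ w₂ w₁ = .inl p := by simp [embV₁]

lemma embV₁_ne {x : V₁} (h : x ≠ w₁) : embV₁ (V₂ := V₂) p w₁ w₂ x = .inr (.inl ⟨x, h⟩) := by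
  simp [embV₁, h]

@[simp] lemma embV₂_w₂ : embV₂ (V₁ := V₁) q w₁ w₂ w₂ = .inl q := by simp [embV₂]

lemma embV₂_ne {x : V₂} (h : x ≠ w₂) : embV₂ (V₁ := V₁) q w₁ w₂ x = .inr (.inr ⟨x, h⟩) := by
  simp [embV₂, h]

/-- The inclusion of `G₀` as a hom. -/
def glueHom₀ : G₀ →g glue G₀ G₁ G₂ p q w₁ w₂ where
  toFun := Sum.inl
  map_rel' := by intro a b h; simpa using h

noncomputable def glueHom₁ : G₁ →g glue G₀ G₁ G₂ p q w₁ w₂ where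
  toFun := embV₁ p w₁ w₂
  map_rel' := by
    intro a b h
    by_cases ha : a = w₁
    · subst ha
      rw [embV₁_w₁, embV₁_ne h.ne']
      exact glue_adj_inl_in1.2 ⟨rfl, h⟩
    · by_cases hb : b = w₁
      · subst hb
        rw [embV₁_w₁, embV₁_ne ha]
        exact ((glue_adj_inl_in1).2 ⟨rfl, h.symm⟩).symm
      · rw [embV₁_ne ha, embV₁_ne hb]
        exact glue_adj_in1_in1.2 h

noncomputable def glueHom₂ : G₂ →g glue G₀ G₁ G₂ p q w₁ w₂ where
  toFun := embV₂ q w₁ w₂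
  map_rel' := by
    intro a b h
    by_cases ha : a = w₂
    · subst ha
      rw [embV₂_w₂, embV₂_ne h.ne']
      exact glue_adj_inl_in2.2 ⟨rfl, h⟩
    · by_cases hb : b = w₂
      · subst hb
        rw [embV₂_w₂, embV₂_ne ha]
        exact ((glue_adj_inl_in2).2 ⟨rfl, h.symm⟩).symm
      · rw [embV₂_ne ha, embV₂_ne hb]
        exact glue_adj_in2_in2.2 h

lemma dist_hom_le {V V' : Type*} {G : SimpleGraph V} {G' : SimpleGraph V'}
    (f : G →g G') {x y : V} (h : G.Reachable x y) :
    G'.dist (f x) (f y) ≤ G.dist x y := by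
  obtain ⟨P, hP⟩ := h.exists_walk_length_eq_dist
  calc G'.dist (f x) (f y) ≤ (P.map f).length := SimpleGraph.dist_le _
    _ = P.length := SimpleGraph.Walk.length_map _ P
    _ = G.dist x y := hP

lemma glue_connected (h₀ : G₀.Connected) (h₁ : G₁.Connected) (h₂ : G₂.Connected) :
    (glue G₀ G₁ G₂ p q w₁ w₂).Connected := by
  have hne : Nonempty V₀ := h₀.nonempty
  rw [SimpleGraph.connected_iff]
  refine ⟨?_, by infer_instance⟩
  have key : ∀ z, (glue G₀ G₁ G₂ p q w₁ w₂).Reachable z (.inl p) := by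
    rintro (a | (a | a))
    · exact (h₀ a p).map (glueHom₀ : G₀ →g glue G₀ G₁ G₂ p q w₁ w₂)
    · have this := (h₁ a.val w₁).map (glueHom₁ : G₁ →g glue G₀ G₁ G₂ p q w₁ w₂)
      have ha : (glueHom₁ : G₁ →g glue G₀ G₁ G₂ p q w₁ w₂) a.val = Sum.inr (Sum.inl a) := by
        show embV₁ p w₁ w₂ a.val = _
        exact embV₁_ne a.prop
      have hw : (glueHom₁ : G₁ →g glue G₀ G₁ G₂ p q w₁ w₂) w₁ = Sum.inl p := by
        show embV₁ p w₁ w₂ w₁ = _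
        exact embV₁_w₁
      rw [ha, hw] at this
      exact this
    · have hr := (h₂ a.val w₂).map (glueHom₂ : G₂ →g glue G₀ G₁ G₂ p q w₁ w₂)
      have h' := (h₀ q p).map (glueHom₀ : G₀ →g glue G₀ G₁ G₂ p q w₁ w₂)
      refine SimpleGraph.Reachable.trans ?_ h'
      have ha : (glueHom₂ : G₂ →g glue G₀ G₁ G₂ p q w₁ w₂) a.val = Sum.inr (Sum.inr a) := by
        show embV₂ q w₁ w₂ a.val = _
        exact embV₂_ne a.prop
      have hw : (glueHom₂ : G₂ →g glue G₀ G₁ G₂ p q w₁ w₂) w₂ = Sum.inl q := by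
        show embV₂ q w₁ w₂ w₂ = _
        exact embV₂_w₂
      rw [ha, hw] at hr
      exact hr
  intro x y
  exact (key x).trans (key y).symm

end GlueDist

section GlueDistEq

variable {V₀ V₁ V₂ : Type*} {G₀ : SimpleGraph V₀} {G₁ : SimpleGraph V₁}
  {G₂ : SimpleGraph V₂} {p q : V₀} {w₁ : V₁} {w₂ : V₂}

@[simp] lemma glue_adj_in1_inl {a : V₀} {b : {x : V₁ // x ≠ w₁}} :
    (glue G₀ G₁ G₂ p q w₁ w₂).Adj (.inr (.inl b)) (.inl a) ↔ a = p ∧ G₁.Adj w₁ b.val :=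
  ⟨fun h => glue_adj_inl_in1.1 h.symm, fun h => (glue_adj_inl_in1.2 h).symm⟩

@[simp] lemma glue_adj_in2_inl {a : V₀} {b : {x : V₂ // x ≠ w₂}} :
    (glue G₀ G₁ G₂ p q w₁ w₂).Adj (.inr (.inr b)) (.inl a) ↔ a = q ∧ G₂.Adj w₂ b.val :=
  ⟨fun h => glue_adj_inl_in2.1 h.symm, fun h => (glue_adj_inl_in2.2 h).symm⟩

@[simp] lemma glue_adj_in2_in1 {a : {x : V₁ // x ≠ w₁}} {b : {x : V₂ // x ≠ w₂}} :
    ¬ (glue G₀ G₁ G₂ p q w₁ w₂).Adj (.inr (.inr b)) (.inr (.inl a)) :=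
  fun h => glue_adj_in1_in2 h.symm

variable (G₀ G₁ G₂ p q w₁ w₂) in
/-- The distance function on the glued graph. -/
noncomputable def glueDist :
    (V₀ ⊕ ({x : V₁ // x ≠ w₁} ⊕ {x : V₂ // x ≠ w₂})) →
    (V₀ ⊕ ({x : V₁ // x ≠ w₁} ⊕ {x : V₂ // x ≠ w₂})) → ℕ
  | .inl a, .inl b => G₀.dist a b
  | .inl a, .inr (.inl b) => G₀.dist a p + G₁.dist w₁ b.val
  | .inl a, .inr (.inr b) => G₀.dist a q + G₂.dist w₂ b.val
  | .inr (.inl a), .inl b => G₁.dist a.val w₁ + G₀.dist p b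
  | .inr (.inl a), .inr (.inl b) => G₁.dist a.val b.val
  | .inr (.inl a), .inr (.inr b) => G₁.dist a.val w₁ + G₀.dist p q + G₂.dist w₂ b.val
  | .inr (.inr a), .inl b => G₂.dist a.val w₂ + G₀.dist q b
  | .inr (.inr a), .inr (.inl b) => G₂.dist a.val w₂ + G₀.dist q p + G₁.dist w₁ b.val
  | .inr (.inr a), .inr (.inr b) => G₂.dist a.val b.val

lemma dist_adj_step {V : Type*} {G : SimpleGraph V} (hc : G.Connected) {a b : V}
    (h : G.Adj a b) (c : V) : G.dist a c ≤ G.dist b c + 1 := by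
  have := hc.dist_triangle (u := a) (v := b) (w := c)
  have h1 : G.dist a b = 1 := SimpleGraph.dist_eq_one_iff_adj.2 h
  omega

lemma glueDist_step (h₀ : G₀.Connected) (h₁ : G₁.Connected) (h₂ : G₂.Connected)
    {x z : V₀ ⊕ ({x : V₁ // x ≠ w₁} ⊕ {x : V₂ // x ≠ w₂})}
    (h : (glue G₀ G₁ G₂ p q w₁ w₂).Adj x z)
    (y : V₀ ⊕ ({x : V₁ // x ≠ w₁} ⊕ {x : V₂ // x ≠ w₂})) :
    glueDist G₀ G₁ G₂ p q w₁ w₂ x y ≤ glueDist G₀ G₁ G₂ p q w₁ w₂ z y + 1 := by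
  obtain (a | (a | a)) := x <;> obtain (b | (b | b)) := z
  · -- inl inl
    rw [glue_adj_inl_inl] at h
    obtain (c | (c | c)) := y <;> simp only [glueDist]
    · exact dist_adj_step h₀ h c
    · have := dist_adj_step h₀ h p; omega
    · have := dist_adj_step h₀ h q; omega
  · -- inl, in1 : a = p, Adj w₁ b
    rw [glue_adj_inl_in1] at h
    obtain ⟨hap, hadj⟩ := h
    subst hap
    obtain (c | (c | c)) := y <;> simp only [glueDist]
    · omega
    · have h1 : G₁.dist w₁ c.val ≤ G₁.dist b.val c.val + 1 := dist_adj_step h₁ hadj c.val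
      have h2 : G₀.dist a a = 0 := SimpleGraph.dist_self
      omega
    · omega
  · -- inl, in2
    rw [glue_adj_inl_in2] at h
    obtain ⟨hap, hadj⟩ := h
    subst hap
    obtain (c | (c | c)) := y <;> simp only [glueDist]
    · omega
    · omega
    · have h1 : G₂.dist w₂ c.val ≤ G₂.dist b.val c.val + 1 := dist_adj_step h₂ hadj c.val
      have h2 : G₀.dist a a = 0 := SimpleGraph.dist_self
      omega
  · -- in1, inl : b = p, Adj w₁ a
    rw [glue_adj_in1_inl] at h
    obtain ⟨hap, hadj⟩ := h
    subst hap
    have haw : G₁.dist a.val w₁ = 1 := SimpleGraph.dist_eq_one_iff_adj.2 hadj.symm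
    obtain (c | (c | c)) := y <;> simp only [glueDist]
    · omega
    · have h1 : G₁.dist a.val c.val ≤ G₁.dist w₁ c.val + 1 := dist_adj_step h₁ hadj.symm c.val
      have h2 : G₀.dist b b = 0 := SimpleGraph.dist_self
      omega
    · omega
  · -- in1 in1
    rw [glue_adj_in1_in1] at h
    obtain (c | (c | c)) := y <;> simp only [glueDist]
    · have := dist_adj_step h₁ h w₁; omega
    · exact dist_adj_step h₁ h c.val
    · have := dist_adj_step h₁ h w₁; omega
  · -- in1 in2 : impossible
    exact absurd h glue_adj_in1_in2
  · -- in2, inl : b = q, Adj w₂ a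
    rw [glue_adj_in2_inl] at h
    obtain ⟨hap, hadj⟩ := h
    subst hap
    have haw : G₂.dist a.val w₂ = 1 := SimpleGraph.dist_eq_one_iff_adj.2 hadj.symm
    obtain (c | (c | c)) := y <;> simp only [glueDist]
    · omega
    · omega
    · have h1 : G₂.dist a.val c.val ≤ G₂.dist w₂ c.val + 1 := dist_adj_step h₂ hadj.symm c.val
      have h2 : G₀.dist b b = 0 := SimpleGraph.dist_self
      omega
  · -- in2 in1 : impossible
    exact absurd h glue_adj_in2_in1
  · -- in2 in2
    rw [glue_adj_in2_in2] at h
    obtain (c | (c | c)) := y <;> simp only [glueDist]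
    · have := dist_adj_step h₂ h w₂; omega
    · have := dist_adj_step h₂ h w₂; omega
    · exact dist_adj_step h₂ h c.val

lemma glueDist_self (x : V₀ ⊕ ({x : V₁ // x ≠ w₁} ⊕ {x : V₂ // x ≠ w₂})) :
    glueDist G₀ G₁ G₂ p q w₁ w₂ x x = 0 := by
  obtain (a | (a | a)) := x <;> simp [glueDist, SimpleGraph.dist_self]

lemma glueDist_le_length (h₀ : G₀.Connected) (h₁ : G₁.Connected) (h₂ : G₂.Connected)
    {x y : V₀ ⊕ ({x : V₁ // x ≠ w₁} ⊕ {x : V₂ // x ≠ w₂})}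
    (P : (glue G₀ G₁ G₂ p q w₁ w₂).Walk x y) :
    glueDist G₀ G₁ G₂ p q w₁ w₂ x y ≤ P.length := by
  induction P with
  | nil => rw [glueDist_self]; exact Nat.zero_le _
  | @cons x z y h P ih =>
    have := glueDist_step h₀ h₁ h₂ h y
    simp only [SimpleGraph.Walk.length_cons]
    omega

lemma glueDist_le_dist (h₀ : G₀.Connected) (h₁ : G₁.Connected) (h₂ : G₂.Connected)
    (x y : V₀ ⊕ ({x : V₁ // x ≠ w₁} ⊕ {x : V₂ // x ≠ w₂})) :
    glueDist G₀ G₁ G₂ p q w₁ w₂ x y ≤ (glue G₀ G₁ G₂ p q w₁ w₂).dist x y := by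
  obtain ⟨P, hP⟩ := ((glue_connected h₀ h₁ h₂) x y).exists_walk_length_eq_dist
  rw [← hP]
  exact glueDist_le_length h₀ h₁ h₂ P

end GlueDistEq

section GlueDistUpper

variable {V₀ V₁ V₂ : Type*} {G₀ : SimpleGraph V₀} {G₁ : SimpleGraph V₁}
  {G₂ : SimpleGraph V₂} {p q : V₀} {w₁ : V₁} {w₂ : V₂}

lemma glue_dist_inl_le (h₀ : G₀.Connected) (a b : V₀) :
    (glue G₀ G₁ G₂ p q w₁ w₂).dist (.inl a) (.inl b) ≤ G₀.dist a b :=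
  dist_hom_le (glueHom₀ : G₀ →g glue G₀ G₁ G₂ p q w₁ w₂) (h₀ a b)

lemma glue_dist_emb₁_le (h₁ : G₁.Connected) (x y : V₁) :
    (glue G₀ G₁ G₂ p q w₁ w₂).dist (embV₁ p w₁ w₂ x) (embV₁ p w₁ w₂ y) ≤ G₁.dist x y :=
  dist_hom_le (glueHom₁ : G₁ →g glue G₀ G₁ G₂ p q w₁ w₂) (h₁ x y)

lemma glue_dist_emb₂_le (h₂ : G₂.Connected) (x y : V₂) :
    (glue G₀ G₁ G₂ p q w₁ w₂).dist (embV₂ q w₁ w₂ x) (embV₂ q w₁ w₂ y) ≤ G₂.dist x y :=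
  dist_hom_le (glueHom₂ : G₂ →g glue G₀ G₁ G₂ p q w₁ w₂) (h₂ x y)

lemma glue_dist_in1_le (h₁ : G₁.Connected) (b : {x : V₁ // x ≠ w₁}) :
    (glue G₀ G₁ G₂ p q w₁ w₂).dist (.inl p) (.inr (.inl b)) ≤ G₁.dist w₁ b.val := by
  have := glue_dist_emb₁_le (G₀ := G₀) (G₂ := G₂) (p := p) (q := q) (w₁ := w₁) (w₂ := w₂) h₁ w₁ b.val
  rwa [embV₁_w₁, embV₁_ne b.prop] at this

lemma glue_dist_in2_le (h₂ : G₂.Connected) (b : {x : V₂ // x ≠ w₂}) :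
    (glue G₀ G₁ G₂ p q w₁ w₂).dist (.inl q) (.inr (.inr b)) ≤ G₂.dist w₂ b.val := by
  have := glue_dist_emb₂_le (G₀ := G₀) (G₁ := G₁) (p := p) (q := q) (w₁ := w₁) (w₂ := w₂) h₂ w₂ b.val
  rwa [embV₂_w₂, embV₂_ne b.prop] at this

lemma glue_dist_le_glueDist (h₀ : G₀.Connected) (h₁ : G₁.Connected) (h₂ : G₂.Connected)
    (x y : V₀ ⊕ ({x : V₁ // x ≠ w₁} ⊕ {x : V₂ // x ≠ w₂})) :
    (glue G₀ G₁ G₂ p q w₁ w₂).dist x y ≤ glueDist G₀ G₁ G₂ p q w₁ w₂ x y := by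
  have hc := glue_connected (p := p) (q := q) (w₁ := w₁) (w₂ := w₂) h₀ h₁ h₂
  obtain (a | (a | a)) := x <;> obtain (b | (b | b)) := y <;> simp only [glueDist]
  · exact glue_dist_inl_le h₀ a b
  · calc (glue G₀ G₁ G₂ p q w₁ w₂).dist (.inl a) (.inr (.inl b))
        ≤ _ + _ := hc.dist_triangle (v := .inl p)
    _ ≤ G₀.dist a p + G₁.dist w₁ b.val :=
        Nat.add_le_add (glue_dist_inl_le h₀ a p) (glue_dist_in1_le h₁ b)
  · calc (glue G₀ G₁ G₂ p q w₁ w₂).dist (.inl a) (.inr (.inr b))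
        ≤ _ + _ := hc.dist_triangle (v := .inl q)
    _ ≤ G₀.dist a q + G₂.dist w₂ b.val :=
        Nat.add_le_add (glue_dist_inl_le h₀ a q) (glue_dist_in2_le h₂ b)
  · calc (glue G₀ G₁ G₂ p q w₁ w₂).dist (.inr (.inl a)) (.inl b)
        ≤ _ + _ := hc.dist_triangle (v := .inl p)
    _ ≤ G₁.dist a.val w₁ + G₀.dist p b := by
        refine Nat.add_le_add ?_ (glue_dist_inl_le h₀ p b)
        rw [SimpleGraph.dist_comm]
        have := glue_dist_in1_le (G₀ := G₀) (G₂ := G₂) (p := p) (q := q) (w₁ := w₁) (w₂ := w₂) h₁ a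
        rwa [SimpleGraph.dist_comm (G := G₁)] at this
  · have := glue_dist_emb₁_le (G₀ := G₀) (G₂ := G₂) (p := p) (q := q) (w₁ := w₁) (w₂ := w₂) h₁ a.val b.val
    rwa [embV₁_ne a.prop, embV₁_ne b.prop] at this
  · calc (glue G₀ G₁ G₂ p q w₁ w₂).dist (.inr (.inl a)) (.inr (.inr b))
        ≤ _ + _ := hc.dist_triangle (v := .inl q)
    _ ≤ (G₁.dist a.val w₁ + G₀.dist p q) + G₂.dist w₂ b.val := by
        refine Nat.add_le_add ?_ (glue_dist_in2_le h₂ b)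
        calc (glue G₀ G₁ G₂ p q w₁ w₂).dist (.inr (.inl a)) (.inl q)
            ≤ _ + _ := hc.dist_triangle (v := .inl p)
        _ ≤ G₁.dist a.val w₁ + G₀.dist p q := by
            refine Nat.add_le_add ?_ (glue_dist_inl_le h₀ p q)
            rw [SimpleGraph.dist_comm]
            have := glue_dist_in1_le (G₀ := G₀) (G₂ := G₂) (p := p) (q := q) (w₁ := w₁) (w₂ := w₂) h₁ a
            rwa [SimpleGraph.dist_comm (G := G₁)] at this
  · calc (glue G₀ G₁ G₂ p q w₁ w₂).dist (.inr (.inr a)) (.inl b)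
        ≤ _ + _ := hc.dist_triangle (v := .inl q)
    _ ≤ G₂.dist a.val w₂ + G₀.dist q b := by
        refine Nat.add_le_add ?_ (glue_dist_inl_le h₀ q b)
        rw [SimpleGraph.dist_comm]
        have := glue_dist_in2_le (G₀ := G₀) (G₁ := G₁) (p := p) (q := q) (w₁ := w₁) (w₂ := w₂) h₂ a
        rwa [SimpleGraph.dist_comm (G := G₂)] at this
  · calc (glue G₀ G₁ G₂ p q w₁ w₂).dist (.inr (.inr a)) (.inr (.inl b))
        ≤ _ + _ := hc.dist_triangle (v := .inl p)
    _ ≤ (G₂.dist a.val w₂ + G₀.dist q p) + G₁.dist w₁ b.val := by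
        refine Nat.add_le_add ?_ (glue_dist_in1_le h₁ b)
        calc (glue G₀ G₁ G₂ p q w₁ w₂).dist (.inr (.inr a)) (.inl p)
            ≤ _ + _ := hc.dist_triangle (v := .inl q)
        _ ≤ G₂.dist a.val w₂ + G₀.dist q p := by
            refine Nat.add_le_add ?_ (glue_dist_inl_le h₀ q p)
            rw [SimpleGraph.dist_comm]
            have := glue_dist_in2_le (G₀ := G₀) (G₁ := G₁) (p := p) (q := q) (w₁ := w₁) (w₂ := w₂) h₂ a
            rwa [SimpleGraph.dist_comm (G := G₂)] at this
  · have := glue_dist_emb₂_le (G₀ := G₀) (G₁ := G₁) (p := p) (q := q) (w₁ := w₁) (w₂ := w₂) h₂ a.val b.val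
    rwa [embV₂_ne a.prop, embV₂_ne b.prop] at this

lemma glue_dist_eq (h₀ : G₀.Connected) (h₁ : G₁.Connected) (h₂ : G₂.Connected)
    (x y : V₀ ⊕ ({x : V₁ // x ≠ w₁} ⊕ {x : V₂ // x ≠ w₂})) :
    (glue G₀ G₁ G₂ p q w₁ w₂).dist x y = glueDist G₀ G₁ G₂ p q w₁ w₂ x y :=
  le_antisymm (glue_dist_le_glueDist h₀ h₁ h₂ x y) (glueDist_le_dist h₀ h₁ h₂ x y)

end GlueDistUpper

section GlueDeg
open Classical

variable {V₀ V₁ V₂ : Type*} {G₀ : SimpleGraph V₀} {G₁ : SimpleGraph V₁}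
  {G₂ : SimpleGraph V₂} {p q : V₀} {w₁ : V₁} {w₂ : V₂}

lemma glue_nbr_in1 (x : {x : V₁ // x ≠ w₁}) :
    (glue G₀ G₁ G₂ p q w₁ w₂).neighborSet (.inr (.inl x)) =
      embV₁ p w₁ w₂ '' (G₁.neighborSet x.val) := by
  ext z
  simp only [SimpleGraph.mem_neighborSet, Set.mem_image]
  constructor
  · intro hz
    obtain (c | (c | c)) := z
    · rw [glue_adj_in1_inl] at hz
      obtain ⟨hcp, h⟩ := hz
      exact ⟨w₁, h.symm, by rw [embV₁_w₁, hcp]⟩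
    · rw [glue_adj_in1_in1] at hz
      exact ⟨c.val, hz, embV₁_ne c.prop⟩
    · exact absurd hz glue_adj_in1_in2
  · rintro ⟨y, hy, rfl⟩
    by_cases hyw : y = w₁
    · subst hyw
      rw [embV₁_w₁]
      exact glue_adj_in1_inl.2 ⟨rfl, hy.symm⟩
    · rw [embV₁_ne hyw]
      exact glue_adj_in1_in1.2 hy

lemma glue_nbr_in2 (x : {x : V₂ // x ≠ w₂}) :
    (glue G₀ G₁ G₂ p q w₁ w₂).neighborSet (.inr (.inr x)) =
      embV₂ q w₁ w₂ '' (G₂.neighborSet x.val) := by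
  ext z
  simp only [SimpleGraph.mem_neighborSet, Set.mem_image]
  constructor
  · intro hz
    obtain (c | (c | c)) := z
    · rw [glue_adj_in2_inl] at hz
      obtain ⟨hcq, h⟩ := hz
      exact ⟨w₂, h.symm, by rw [embV₂_w₂, hcq]⟩
    · exact absurd hz glue_adj_in2_in1
    · rw [glue_adj_in2_in2] at hz
      exact ⟨c.val, hz, embV₂_ne c.prop⟩
  · rintro ⟨y, hy, rfl⟩
    by_cases hyw : y = w₂
    · subst hyw
      rw [embV₂_w₂]
      exact glue_adj_in2_inl.2 ⟨rfl, hy.symm⟩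
    · rw [embV₂_ne hyw]
      exact glue_adj_in2_in2.2 hy

lemma glue_nbr_inl (a : V₀) :
    (glue G₀ G₁ G₂ p q w₁ w₂).neighborSet (.inl a) =
      (Sum.inl '' (G₀.neighborSet a) ∪
        (if a = p then embV₁ p w₁ w₂ '' (G₁.neighborSet w₁) else ∅)) ∪
        (if a = q then embV₂ q w₁ w₂ '' (G₂.neighborSet w₂) else ∅) := by
  ext z
  simp only [SimpleGraph.mem_neighborSet, Set.mem_union, Set.mem_image]
  constructor
  · intro hz
    obtain (c | (c | c)) := z
    · rw [glue_adj_inl_inl] at hz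
      exact Or.inl (Or.inl ⟨c, hz, rfl⟩)
    · rw [glue_adj_inl_in1] at hz
      obtain ⟨rfl, h⟩ := hz
      refine Or.inl (Or.inr ?_)
      rw [if_pos rfl]
      exact ⟨c.val, h, by rw [embV₁_ne c.prop]⟩
    · rw [glue_adj_inl_in2] at hz
      obtain ⟨rfl, h⟩ := hz
      refine Or.inr ?_
      rw [if_pos rfl]
      exact ⟨c.val, h, by rw [embV₂_ne c.prop]⟩
  · rintro ((⟨c, hc, rfl⟩ | h) | h)
    · exact glue_adj_inl_inl.2 hc
    · by_cases hap : a = p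
      · rw [if_pos hap] at h
        obtain ⟨y, hy, rfl⟩ := h
        rw [embV₁_ne hy.ne']
        exact glue_adj_inl_in1.2 ⟨hap, hy⟩
      · rw [if_neg hap] at h
        exact absurd h (Set.notMem_empty _)
    · by_cases haq : a = q
      · rw [if_pos haq] at h
        obtain ⟨y, hy, rfl⟩ := h
        rw [embV₂_ne hy.ne']
        exact glue_adj_inl_in2.2 ⟨haq, hy⟩
      · rw [if_neg haq] at h
        exact absurd h (Set.notMem_empty _)

variable [Fintype V₀] [Fintype V₁] [Fintype V₂]

lemma glue_deg_in1 (x : {x : V₁ // x ≠ w₁}) :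
    ((glue G₀ G₁ G₂ p q w₁ w₂).neighborSet (.inr (.inl x))).ncard =
      (G₁.neighborSet x.val).ncard := by
  rw [glue_nbr_in1, Set.ncard_image_of_injective _ embV₁_inj]

lemma glue_deg_in2 (x : {x : V₂ // x ≠ w₂}) :
    ((glue G₀ G₁ G₂ p q w₁ w₂).neighborSet (.inr (.inr x))).ncard =
      (G₂.neighborSet x.val).ncard := by
  rw [glue_nbr_in2, Set.ncard_image_of_injective _ embV₂_inj]

lemma glue_deg_inl (a : V₀) :
    ((glue G₀ G₁ G₂ p q w₁ w₂).neighborSet (.inl a)).ncard =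
      (G₀.neighborSet a).ncard + (if a = p then (G₁.neighborSet w₁).ncard else 0) +
        (if a = q then (G₂.neighborSet w₂).ncard else 0) := by
  classical
  rw [glue_nbr_inl]
  have him1 : ∀ z ∈ (if a = p then embV₁ (V₂ := V₂) p w₁ w₂ '' (G₁.neighborSet w₁) else ∅),
      ∃ b : {x : V₁ // x ≠ w₁}, z = .inr (.inl b) := by
    intro z hz
    split_ifs at hz
    · obtain ⟨y, hy, rfl⟩ := hz
      exact ⟨⟨y, hy.ne'⟩, (embV₁_ne hy.ne').symm ▸ rfl⟩
    · exact absurd hz (Set.notMem_empty _)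
  have him2 : ∀ z ∈ (if a = q then embV₂ (V₁ := V₁) q w₁ w₂ '' (G₂.neighborSet w₂) else ∅),
      ∃ b : {x : V₂ // x ≠ w₂}, z = .inr (.inr b) := by
    intro z hz
    split_ifs at hz
    · obtain ⟨y, hy, rfl⟩ := hz
      exact ⟨⟨y, hy.ne'⟩, (embV₂_ne hy.ne').symm ▸ rfl⟩
    · exact absurd hz (Set.notMem_empty _)
  have d1 : Disjoint (Sum.inl '' (G₀.neighborSet a))
      (if a = p then embV₁ (V₂ := V₂) p w₁ w₂ '' (G₁.neighborSet w₁) else ∅) := by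
    rw [Set.disjoint_right]
    rintro z hz ⟨c, hc, rfl⟩
    obtain ⟨b, hb⟩ := him1 _ hz
    simp at hb
  have d2 : Disjoint (Sum.inl '' (G₀.neighborSet a) ∪
      (if a = p then embV₁ (V₂ := V₂) p w₁ w₂ '' (G₁.neighborSet w₁) else ∅))
      (if a = q then embV₂ (V₁ := V₁) q w₁ w₂ '' (G₂.neighborSet w₂) else ∅) := by
    rw [Set.disjoint_right]
    rintro z hz hz'
    obtain ⟨b, rfl⟩ := him2 _ hz
    rcases hz' with ⟨c, hc, hcc⟩ | h'
    · simp at hcc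
    · obtain ⟨b', hb'⟩ := him1 _ h'
      simp at hb'
  rw [Set.ncard_union_eq d2 (Set.toFinite _) (Set.toFinite _),
    Set.ncard_union_eq d1 (Set.toFinite _) (Set.toFinite _),
    Set.ncard_image_of_injective _ Sum.inl_injective]
  have e1 : (if a = p then embV₁ (V₂ := V₂) p w₁ w₂ '' (G₁.neighborSet w₁) else ∅).ncard =
      (if a = p then (G₁.neighborSet w₁).ncard else 0) := by
    split_ifs
    · rw [Set.ncard_image_of_injective _ embV₁_inj]
    · simp
  have e2 : (if a = q then embV₂ (V₁ := V₁) q w₁ w₂ '' (G₂.neighborSet w₂) else ∅).ncard =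
      (if a = q then (G₂.neighborSet w₂).ncard else 0) := by
    split_ifs
    · rw [Set.ncard_image_of_injective _ embV₂_inj]
    · simp
  rw [e1, e2]

lemma nbr_ncard_pos {V : Type*} [Fintype V] {G : SimpleGraph V} (hc : G.Connected)
    (hcard : 2 ≤ Fintype.card V) (x : V) : 0 < (G.neighborSet x).ncard := by
  obtain ⟨y, hy⟩ := Fintype.exists_ne_of_one_lt_card (by omega) x
  obtain ⟨P⟩ := hc x y
  rw [Set.ncard_pos (Set.toFinite _)]
  cases P with
  | nil => exact absurd rfl hy.symm
  | cons h _ => exact ⟨_, h⟩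

end GlueDeg

section Twin
open Classical

variable {V₀ : Type*} {G₀ : SimpleGraph V₀} {u v : V₀}

lemma twin_adj_swap (htwin : ∀ x : V₀, x ≠ u → x ≠ v → (G₀.Adj u x ↔ G₀.Adj v x))
    (a b : V₀) (h : G₀.Adj a b) : G₀.Adj (Equiv.swap u v a) (Equiv.swap u v b) := by
  by_cases hau : a = u
  · subst hau
    rw [Equiv.swap_apply_left]
    by_cases hbv : b = v
    · subst hbv
      rw [Equiv.swap_apply_right]
      exact h.symm
    · rw [Equiv.swap_apply_of_ne_of_ne h.ne' hbv]
      exact (htwin b h.ne' hbv).1 h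
  · by_cases hav : a = v
    · subst hav
      rw [Equiv.swap_apply_right]
      by_cases hbu : b = u
      · subst hbu
        rw [Equiv.swap_apply_left]
        exact h.symm
      · rw [Equiv.swap_apply_of_ne_of_ne hbu h.ne']
        exact (htwin b hbu h.ne').2 h
    · rw [Equiv.swap_apply_of_ne_of_ne hau hav]
      by_cases hbu : b = u
      · subst hbu
        rw [Equiv.swap_apply_left]
        exact ((htwin a hau hav).1 h.symm).symm
      · by_cases hbv : b = v
        · subst hbv
          rw [Equiv.swap_apply_right]
          exact ((htwin a hau hav).2 h.symm).symm
        · rw [Equiv.swap_apply_of_ne_of_ne hbu hbv]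
          exact h

/-- The swap of twin vertices is a graph automorphism. -/
noncomputable def twinIso (htwin : ∀ x : V₀, x ≠ u → x ≠ v → (G₀.Adj u x ↔ G₀.Adj v x)) :
    G₀ ≃g G₀ where
  toEquiv := Equiv.swap u v
  map_rel_iff' := by
    intro a b
    constructor
    · intro h
      have := twin_adj_swap htwin _ _ h
      rwa [Equiv.swap_apply_self, Equiv.swap_apply_self] at this
    · exact twin_adj_swap htwin a b

lemma twin_dist_swap (h₀ : G₀.Connected)
    (htwin : ∀ x : V₀, x ≠ u → x ≠ v → (G₀.Adj u x ↔ G₀.Adj v x)) (a b : V₀) :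
    G₀.dist (Equiv.swap u v a) (Equiv.swap u v b) = G₀.dist a b := by
  have h1 : G₀.dist (Equiv.swap u v a) (Equiv.swap u v b) ≤ G₀.dist a b :=
    dist_hom_le (twinIso htwin).toHom (h₀ a b)
  have h2 := dist_hom_le (twinIso htwin).toHom (h₀ (Equiv.swap u v a) (Equiv.swap u v b))
  have e1 : ((twinIso (G₀ := G₀) htwin).toHom : V₀ → V₀) = Equiv.swap u v := rfl
  rw [e1] at h2
  rw [Equiv.swap_apply_self, Equiv.swap_apply_self] at h2
  omega

lemma twin_nbr_swap
    (htwin : ∀ x : V₀, x ≠ u → x ≠ v → (G₀.Adj u x ↔ G₀.Adj v x)) (a : V₀) :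
    G₀.neighborSet (Equiv.swap u v a) = Equiv.swap u v '' (G₀.neighborSet a) := by
  ext z
  simp only [SimpleGraph.mem_neighborSet, Set.mem_image]
  constructor
  · intro h
    refine ⟨Equiv.swap u v z, ?_, Equiv.swap_apply_self u v z⟩
    have := twin_adj_swap htwin _ _ h
    rwa [Equiv.swap_apply_self] at this
  · rintro ⟨y, hy, rfl⟩
    exact twin_adj_swap htwin _ _ hy

lemma twin_deg_swap [Fintype V₀]
    (htwin : ∀ x : V₀, x ≠ u → x ≠ v → (G₀.Adj u x ↔ G₀.Adj v x)) (a : V₀) :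
    (G₀.neighborSet (Equiv.swap u v a)).ncard = (G₀.neighborSet a).ncard := by
  rw [twin_nbr_swap htwin, Set.ncard_image_of_injective _ (Equiv.swap u v).injective]

end Twin

lemma rdd_L1 {a b X Y t : ℝ} (ha : 0 < a) (hab : a ≤ b) (ht : 0 ≤ t) :
    X / a + Y / b ≤ (X + t) / a + (Y - t) / b := by
  have hb : 0 < b := lt_of_lt_of_le ha hab
  have key : t / b ≤ t / a := div_le_div_of_nonneg_left ht ha hab
  have e1 : (X + t) / a = X / a + t / a := add_div _ _ _
  have e2 : (Y - t) / b = Y / b - t / b := sub_div _ _ _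
  linarith

open Classical in
noncomputable def Tterm {V : Type*} (G : SimpleGraph V) (x y : V) : ℝ :=
  if x ≠ y then
    (((G.neighborSet x).ncard : ℝ) + ((G.neighborSet y).ncard : ℝ)) / (G.dist x y : ℝ)
  else 0

lemma RDD_eq {V : Type*} [Fintype V] (G : SimpleGraph V) :
    RDD G = (∑ x : V, ∑ y : V, Tterm G x y) / 2 := rfl

lemma Tterm_of_ne {V : Type*} {G : SimpleGraph V} {x y : V} (h : x ≠ y) :
    Tterm G x y =
      (((G.neighborSet x).ncard : ℝ) + ((G.neighborSet y).ncard : ℝ)) / (G.dist x y : ℝ) := by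
  unfold Tterm
  rw [if_pos h]

@[simp] lemma Tterm_self {V : Type*} (G : SimpleGraph V) (x : V) :
    Tterm G x x = 0 := by
  unfold Tterm
  simp

lemma rdd_pair {d X Y X' Y' : ℝ} (h : X + Y = X' + Y') :
    X / d + Y / d ≤ X' / d + Y' / d :=
  le_of_eq (by rw [← add_div, ← add_div, h])

lemma rdd_A {a b X Y X' Y' r : ℝ} (ha : 0 < a) (hab : a ≤ b) (hr : 0 ≤ r)
    (hX : X' = X + r) (hY : Y' = Y - r) : X / a + Y / b ≤ X' / a + Y' / b := by
  have key : r / b ≤ r / a := div_le_div_of_nonneg_left hr ha hab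
  rw [hX, hY, add_div, sub_div]
  linarith

lemma rdd_B {a b X Y X' Y' r : ℝ} (ha : 0 < a) (hab : a ≤ b) (hr : 0 ≤ r)
    (hX : X' = X + r) (hY : Y' = Y - r) : Y / b + X / a ≤ Y' / b + X' / a := by
  have key : r / b ≤ r / a := div_le_div_of_nonneg_left hr ha hab
  rw [hX, hY, add_div, sub_div]
  linarith

lemma rdd_C {a b X Y X' Y' r : ℝ} (ha : 0 < a) (hab : a ≤ b) (hr : 0 ≤ r)
    (hX : X' = Y + r) (hY : Y' = X - r) : X / b + Y / a ≤ X' / a + Y' / b := by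
  have key : r / b ≤ r / a := div_le_div_of_nonneg_left hr ha hab
  rw [hX, hY, add_div, sub_div]
  linarith

lemma rdd_D {a b X Y X' Y' r : ℝ} (ha : 0 < a) (hab : a ≤ b) (hr : 0 ≤ r)
    (hX : X' = X + r) (hY : Y' = Y - r) : X / a + Y / b ≤ Y' / b + X' / a := by
  have key : r / b ≤ r / a := div_le_div_of_nonneg_left hr ha hab
  rw [hX, hY, add_div, sub_div]
  linarith

lemma rdd_E {a b S : ℝ} (hS : 0 ≤ S) (ha : 0 < a) (hab : a ≤ b) :
    S / b + S / b ≤ S / a + S / a := by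
  have key : S / b ≤ S / a := div_le_div_of_nonneg_left hS ha hab
  linarith

section KeyLemma

open Classical

variable {V₀ V₁ V₂ : Type*} [Fintype V₀] [Fintype V₁] [Fintype V₂]

lemma glue_key_le
    (G₀ : SimpleGraph V₀) (G₁ : SimpleGraph V₁) (G₂ : SimpleGraph V₂)
    (h₀ : G₀.Connected) (h₁ : G₁.Connected) (h₂ : G₂.Connected)
    (u v : V₀) (huv : u ≠ v)
    (htwin : ∀ x : V₀, x ≠ u → x ≠ v → (G₀.Adj u x ↔ G₀.Adj v x))
    (w₁ : V₁) (w₂ : V₂)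
    (x y : V₀ ⊕ ({x : V₁ // x ≠ w₁} ⊕ {x : V₂ // x ≠ w₂})) :
    Tterm (glue G₀ G₁ G₂ u v w₁ w₂) x y +
      Tterm (glue G₀ G₁ G₂ u v w₁ w₂)
        (Equiv.sumCongr (Equiv.swap u v) (Equiv.refl _) x)
        (Equiv.sumCongr (Equiv.swap u v) (Equiv.refl _) y) ≤
    Tterm (glue G₀ G₁ G₂ u u w₁ w₂) x y +
      Tterm (glue G₀ G₁ G₂ u u w₁ w₂)
        (Equiv.sumCongr (Equiv.swap u v) (Equiv.refl _) x)
        (Equiv.sumCongr (Equiv.swap u v) (Equiv.refl _) y) := by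
  have dH := glue_dist_eq (G₀ := G₀) (G₁ := G₁) (G₂ := G₂) (p := u) (q := v)
    (w₁ := w₁) (w₂ := w₂) h₀ h₁ h₂
  have dH' := glue_dist_eq (G₀ := G₀) (G₁ := G₁) (G₂ := G₂) (p := u) (q := u)
    (w₁ := w₁) (w₂ := w₂) h₀ h₁ h₂
  have hsw := twin_dist_swap h₀ htwin
  have hκ : (G₀.neighborSet v).ncard = (G₀.neighborSet u).ncard := by
    have := twin_deg_swap htwin u
    rwa [Equiv.swap_apply_left] at this
  have hκ' : ((G₀.neighborSet v).ncard : ℝ) = ((G₀.neighborSet u).ncard : ℝ) := by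
    exact_mod_cast hκ
  have hδ : 0 < G₀.dist u v := h₀.pos_dist_of_ne huv
  have h00 : G₀.dist u u = 0 := SimpleGraph.dist_self
  have hvv : G₀.dist v v = 0 := SimpleGraph.dist_self
  have hvu : G₀.dist v u = G₀.dist u v := SimpleGraph.dist_comm
  have pairdeg : ∀ c : V₀,
      ((G₀.neighborSet c).ncard + (if c = u then (G₁.neighborSet w₁).ncard else 0) +
        (if c = u then (G₂.neighborSet w₂).ncard else 0)) +
      ((G₀.neighborSet (Equiv.swap u v c)).ncard +
        (if Equiv.swap u v c = u then (G₁.neighborSet w₁).ncard else 0) +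
        (if Equiv.swap u v c = u then (G₂.neighborSet w₂).ncard else 0)) =
      ((G₀.neighborSet c).ncard + (if c = u then (G₁.neighborSet w₁).ncard else 0) +
        (if c = v then (G₂.neighborSet w₂).ncard else 0)) +
      ((G₀.neighborSet (Equiv.swap u v c)).ncard +
        (if Equiv.swap u v c = u then (G₁.neighborSet w₁).ncard else 0) +
        (if Equiv.swap u v c = v then (G₂.neighborSet w₂).ncard else 0)) := by
    intro c
    by_cases hcu : c = u
    · subst hcu
      rw [Equiv.swap_apply_left]
      simp [huv, Ne.symm huv]
      omega
    · by_cases hcv : c = v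
      · subst hcv
        rw [Equiv.swap_apply_right]
        simp [huv, Ne.symm huv, hcu]
        omega
      · rw [Equiv.swap_apply_of_ne_of_ne hcu hcv]
        simp [hcu, hcv]
  obtain (a | (c | c)) := x <;> obtain (b | (d | d)) := y <;>
    simp only [Equiv.sumCongr_apply, Sum.map_inl, Sum.map_inr, id_eq, Equiv.refl_apply]
  · -- inl a, inl b
    by_cases hab : a = b
    · subst hab
      simp
    · have h1 : (Sum.inl a : V₀ ⊕ ({x : V₁ // x ≠ w₁} ⊕ {x : V₂ // x ≠ w₂})) ≠ Sum.inl b :=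
        fun h => hab (Sum.inl.inj h)
      have h2 : (Sum.inl (Equiv.swap u v a) : V₀ ⊕ ({x : V₁ // x ≠ w₁} ⊕ {x : V₂ // x ≠ w₂})) ≠
          Sum.inl (Equiv.swap u v b) :=
        fun h => hab ((Equiv.swap u v).injective (Sum.inl.inj h))
      simp only [Tterm_of_ne h1, Tterm_of_ne h2, dH, dH', glueDist, glue_deg_inl]
      rw [hsw a b]
      refine rdd_pair ?_
      have pa := pairdeg a
      have pb := pairdeg b
      have pa' : ((_ : ℕ) : ℝ) = ((_ : ℕ) : ℝ) := congrArg _ pa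
      have pb' : ((_ : ℕ) : ℝ) = ((_ : ℕ) : ℝ) := congrArg _ pb
      push_cast at pa' pb' ⊢
      linarith
  · -- inl a, in1 d
    have h1 : (Sum.inl a : V₀ ⊕ ({x : V₁ // x ≠ w₁} ⊕ {x : V₂ // x ≠ w₂})) ≠
        Sum.inr (Sum.inl d) := Sum.inl_ne_inr
    have h2 : (Sum.inl (Equiv.swap u v a) : V₀ ⊕ ({x : V₁ // x ≠ w₁} ⊕ {x : V₂ // x ≠ w₂})) ≠
        Sum.inr (Sum.inl d) := Sum.inl_ne_inr
    have hepos : 0 < G₁.dist w₁ d.val := h₁.pos_dist_of_ne (Ne.symm d.prop)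
    simp only [Tterm_of_ne h1, Tterm_of_ne h2, dH, dH', glueDist, glue_deg_inl, glue_deg_in1]
    by_cases hau : a = u
    · subst hau
      rw [Equiv.swap_apply_left]
      simp [huv, Ne.symm huv, h00, hvv, hvu]
      refine rdd_A (r := ((G₂.neighborSet w₂).ncard : ℝ)) ?_ ?_ ?_ ?_ ?_
      · norm_cast
      · norm_cast; omega
      · positivity
      · push_cast; ring
      · push_cast; ring
    · by_cases hav : a = v
      · subst hav
        rw [Equiv.swap_apply_right]
        simp [huv, Ne.symm huv, h00, hvv, hvu]
        refine rdd_B (r := ((G₂.neighborSet w₂).ncard : ℝ)) ?_ ?_ ?_ ?_ ?_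
        · norm_cast
        · norm_cast; omega
        · positivity
        · push_cast; ring
        · push_cast; ring
      · rw [Equiv.swap_apply_of_ne_of_ne hau hav]
        simp only [if_neg hau, if_neg hav]
        exact le_rfl
  · -- inl a, in2 d
    have h1 : (Sum.inl a : V₀ ⊕ ({x : V₁ // x ≠ w₁} ⊕ {x : V₂ // x ≠ w₂})) ≠
        Sum.inr (Sum.inr d) := Sum.inl_ne_inr
    have h2 : (Sum.inl (Equiv.swap u v a) : V₀ ⊕ ({x : V₁ // x ≠ w₁} ⊕ {x : V₂ // x ≠ w₂})) ≠
        Sum.inr (Sum.inr d) := Sum.inl_ne_inr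
    have hfpos : 0 < G₂.dist w₂ d.val := h₂.pos_dist_of_ne (Ne.symm d.prop)
    simp only [Tterm_of_ne h1, Tterm_of_ne h2, dH, dH', glueDist, glue_deg_inl, glue_deg_in2]
    by_cases hau : a = u
    · subst hau
      rw [Equiv.swap_apply_left]
      simp [huv, Ne.symm huv, h00, hvv, hvu]
      refine rdd_C (r := ((G₁.neighborSet w₁).ncard : ℝ)) ?_ ?_ ?_ ?_ ?_
      · norm_cast
      · norm_cast; omega
      · positivity
      · push_cast; linarith [hκ']
      · push_cast; linarith [hκ']
    · by_cases hav : a = v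
      · subst hav
        rw [Equiv.swap_apply_right]
        simp [huv, Ne.symm huv, h00, hvv, hvu]
        refine rdd_D (r := ((G₁.neighborSet w₁).ncard : ℝ)) ?_ ?_ ?_ ?_ ?_
        · norm_cast
        · norm_cast; omega
        · positivity
        · push_cast; linarith [hκ']
        · push_cast; linarith [hκ']
      · rw [Equiv.swap_apply_of_ne_of_ne hau hav]
        have hab : G₀.dist a v = G₀.dist a u := by
          have := hsw a v
          rw [Equiv.swap_apply_of_ne_of_ne hau hav, Equiv.swap_apply_right] at this
          exact this.symm
        simp only [if_neg hau, if_neg hav, hab]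
        exact le_rfl
  · -- in1 c, inl b
    have h1 : (Sum.inr (Sum.inl c) : V₀ ⊕ ({x : V₁ // x ≠ w₁} ⊕ {x : V₂ // x ≠ w₂})) ≠
        Sum.inl b := Sum.inr_ne_inl
    have h2 : (Sum.inr (Sum.inl c) : V₀ ⊕ ({x : V₁ // x ≠ w₁} ⊕ {x : V₂ // x ≠ w₂})) ≠
        Sum.inl (Equiv.swap u v b) := Sum.inr_ne_inl
    have hepos : 0 < G₁.dist c.val w₁ := h₁.pos_dist_of_ne c.prop
    simp only [Tterm_of_ne h1, Tterm_of_ne h2, dH, dH', glueDist, glue_deg_inl, glue_deg_in1]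
    by_cases hbu : b = u
    · subst hbu
      rw [Equiv.swap_apply_left]
      simp [huv, Ne.symm huv, h00, hvv, hvu]
      refine rdd_A (r := ((G₂.neighborSet w₂).ncard : ℝ)) ?_ ?_ ?_ ?_ ?_
      · norm_cast
      · norm_cast; omega
      · positivity
      · push_cast; ring
      · push_cast; ring
    · by_cases hbv : b = v
      · subst hbv
        rw [Equiv.swap_apply_right]
        simp [huv, Ne.symm huv, h00, hvv, hvu]
        refine rdd_B (r := ((G₂.neighborSet w₂).ncard : ℝ)) ?_ ?_ ?_ ?_ ?_
        · norm_cast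
        · norm_cast; omega
        · positivity
        · push_cast; ring
        · push_cast; ring
      · rw [Equiv.swap_apply_of_ne_of_ne hbu hbv]
        simp only [if_neg hbu, if_neg hbv]
        exact le_rfl
  · -- in1 c, in1 d
    by_cases hcd : c = d
    · subst hcd
      simp
    · have h1 : (Sum.inr (Sum.inl c) : V₀ ⊕ ({x : V₁ // x ≠ w₁} ⊕ {x : V₂ // x ≠ w₂})) ≠
          Sum.inr (Sum.inl d) := by simpa using hcd
      simp only [Tterm_of_ne h1, dH, dH', glueDist, glue_deg_in1]
      exact le_rfl
  · -- in1 c, in2 d : the cross case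
    have h1 : (Sum.inr (Sum.inl c) : V₀ ⊕ ({x : V₁ // x ≠ w₁} ⊕ {x : V₂ // x ≠ w₂})) ≠
        Sum.inr (Sum.inr d) := by simp
    have hepos : 0 < G₁.dist c.val w₁ := h₁.pos_dist_of_ne c.prop
    simp only [Tterm_of_ne h1, dH, dH', glueDist, glue_deg_in1, glue_deg_in2, h00,
      Nat.add_zero]
    refine rdd_E ?_ ?_ ?_
    · positivity
    · norm_cast; omega
    · norm_cast; omega
  · -- in2 c, inl b
    have h1 : (Sum.inr (Sum.inr c) : V₀ ⊕ ({x : V₁ // x ≠ w₁} ⊕ {x : V₂ // x ≠ w₂})) ≠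
        Sum.inl b := Sum.inr_ne_inl
    have h2 : (Sum.inr (Sum.inr c) : V₀ ⊕ ({x : V₁ // x ≠ w₁} ⊕ {x : V₂ // x ≠ w₂})) ≠
        Sum.inl (Equiv.swap u v b) := Sum.inr_ne_inl
    have hfpos : 0 < G₂.dist c.val w₂ := h₂.pos_dist_of_ne c.prop
    simp only [Tterm_of_ne h1, Tterm_of_ne h2, dH, dH', glueDist, glue_deg_inl, glue_deg_in2]
    by_cases hbu : b = u
    · subst hbu
      rw [Equiv.swap_apply_left]
      simp [huv, Ne.symm huv, h00, hvv, hvu]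
      refine rdd_C (r := ((G₁.neighborSet w₁).ncard : ℝ)) ?_ ?_ ?_ ?_ ?_
      · norm_cast
      · norm_cast; omega
      · positivity
      · push_cast; linarith [hκ']
      · push_cast; linarith [hκ']
    · by_cases hbv : b = v
      · subst hbv
        rw [Equiv.swap_apply_right]
        simp [huv, Ne.symm huv, h00, hvv, hvu]
        refine rdd_D (r := ((G₁.neighborSet w₁).ncard : ℝ)) ?_ ?_ ?_ ?_ ?_
        · norm_cast
        · norm_cast; omega
        · positivity
        · push_cast; linarith [hκ']
        · push_cast; linarith [hκ']
      · rw [Equiv.swap_apply_of_ne_of_ne hbu hbv]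
        have hab : G₀.dist v b = G₀.dist u b := by
          have := hsw u b
          rwa [Equiv.swap_apply_left, Equiv.swap_apply_of_ne_of_ne hbu hbv] at this
        simp only [if_neg hbu, if_neg hbv, hab]
        exact le_rfl
  · -- in2 c, in1 d
    have h1 : (Sum.inr (Sum.inr c) : V₀ ⊕ ({x : V₁ // x ≠ w₁} ⊕ {x : V₂ // x ≠ w₂})) ≠
        Sum.inr (Sum.inl d) := by simp
    have hfpos : 0 < G₂.dist c.val w₂ := h₂.pos_dist_of_ne c.prop
    simp only [Tterm_of_ne h1, dH, dH', glueDist, glue_deg_in1, glue_deg_in2, h00, hvu,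
      Nat.add_zero]
    refine rdd_E ?_ ?_ ?_
    · positivity
    · norm_cast; omega
    · norm_cast; omega
  · -- in2 c, in2 d
    by_cases hcd : c = d
    · subst hcd
      simp
    · have h1 : (Sum.inr (Sum.inr c) : V₀ ⊕ ({x : V₁ // x ≠ w₁} ⊕ {x : V₂ // x ≠ w₂})) ≠
          Sum.inr (Sum.inr d) := by simpa using hcd
      simp only [Tterm_of_ne h1, dH, dH', glueDist, glue_deg_in2]
      exact le_rfl

end KeyLemma

lemma rdd_E_lt {a b S : ℝ} (hS : 0 < S) (ha : 0 < a) (hab : a < b) :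
    S / b + S / b < S / a + S / a := by
  have key : S / b < S / a := div_lt_div_of_pos_left hS ha hab
  linarith

section KeyLemma2

open Classical

variable {V₀ V₁ V₂ : Type*} [Fintype V₀] [Fintype V₁] [Fintype V₂]

lemma glue_key_lt
    (G₀ : SimpleGraph V₀) (G₁ : SimpleGraph V₁) (G₂ : SimpleGraph V₂)
    (h₀ : G₀.Connected) (h₁ : G₁.Connected) (h₂ : G₂.Connected)
    (u v : V₀) (huv : u ≠ v)
    (htwin : ∀ x : V₀, x ≠ u → x ≠ v → (G₀.Adj u x ↔ G₀.Adj v x))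
    (w₁ : V₁) (w₂ : V₂) (hV₁ : 2 ≤ Fintype.card V₁)
    (c : {x : V₁ // x ≠ w₁}) (d : {x : V₂ // x ≠ w₂}) :
    Tterm (glue G₀ G₁ G₂ u v w₁ w₂) (.inr (.inl c)) (.inr (.inr d)) +
      Tterm (glue G₀ G₁ G₂ u v w₁ w₂)
        (Equiv.sumCongr (Equiv.swap u v) (Equiv.refl _) (.inr (.inl c)))
        (Equiv.sumCongr (Equiv.swap u v) (Equiv.refl _) (.inr (.inr d))) <
    Tterm (glue G₀ G₁ G₂ u u w₁ w₂) (.inr (.inl c)) (.inr (.inr d)) +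
      Tterm (glue G₀ G₁ G₂ u u w₁ w₂)
        (Equiv.sumCongr (Equiv.swap u v) (Equiv.refl _) (.inr (.inl c)))
        (Equiv.sumCongr (Equiv.swap u v) (Equiv.refl _) (.inr (.inr d))) := by
  have dH := glue_dist_eq (G₀ := G₀) (G₁ := G₁) (G₂ := G₂) (p := u) (q := v)
    (w₁ := w₁) (w₂ := w₂) h₀ h₁ h₂
  have dH' := glue_dist_eq (G₀ := G₀) (G₁ := G₁) (G₂ := G₂) (p := u) (q := u)
    (w₁ := w₁) (w₂ := w₂) h₀ h₁ h₂
  have hδ : 0 < G₀.dist u v := h₀.pos_dist_of_ne huv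
  have h00 : G₀.dist u u = 0 := SimpleGraph.dist_self
  have hepos : 0 < G₁.dist c.val w₁ := h₁.pos_dist_of_ne c.prop
  have hn₁ : 0 < (G₁.neighborSet c.val).ncard := nbr_ncard_pos h₁ hV₁ c.val
  have h1 : (Sum.inr (Sum.inl c) : V₀ ⊕ ({x : V₁ // x ≠ w₁} ⊕ {x : V₂ // x ≠ w₂})) ≠
      Sum.inr (Sum.inr d) := by simp
  simp only [Equiv.sumCongr_apply, Sum.map_inl, Sum.map_inr, id_eq, Equiv.refl_apply]
  simp only [Tterm_of_ne h1, dH, dH', glueDist, glue_deg_in1, glue_deg_in2, h00,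
    Nat.add_zero]
  refine rdd_E_lt ?_ ?_ ?_
  · have h2 : (0:ℝ) < ((G₁.neighborSet c.val).ncard : ℝ) := by exact_mod_cast hn₁
    positivity
  · norm_cast; omega
  · norm_cast; omega

end KeyLemma2

theorem rdd_glue_lt {V₀ V₁ V₂ : Type*} [Fintype V₀] [Fintype V₁] [Fintype V₂]
    [DecidableEq V₁] [DecidableEq V₂]
    (G₀ : SimpleGraph V₀) (G₁ : SimpleGraph V₁) (G₂ : SimpleGraph V₂)
    (h₀ : G₀.Connected) (h₁ : G₁.Connected) (h₂ : G₂.Connected)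
    (u v : V₀) (huv : u ≠ v)
    (htwin : ∀ x : V₀, x ≠ u → x ≠ v → (G₀.Adj u x ↔ G₀.Adj v x))
    (w₁ : V₁) (w₂ : V₂)
    (hV₁ : 2 ≤ Fintype.card V₁) (hV₂ : 2 ≤ Fintype.card V₂) :
    RDD (glue G₀ G₁ G₂ u v w₁ w₂) < RDD (glue G₀ G₁ G₂ u u w₁ w₂) := by
  classical
  obtain ⟨x₁, hx₁⟩ := Fintype.exists_ne_of_one_lt_card (by omega) w₁
  obtain ⟨x₂, hx₂⟩ := Fintype.exists_ne_of_one_lt_card (by omega) w₂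
  have key := glue_key_le G₀ G₁ G₂ h₀ h₁ h₂ u v huv htwin w₁ w₂
  have keylt := glue_key_lt G₀ G₁ G₂ h₀ h₁ h₂ u v huv htwin w₁ w₂ hV₁ ⟨x₁, hx₁⟩ ⟨x₂, hx₂⟩
  set σ := Equiv.sumCongr (Equiv.swap u v)
    (Equiv.refl ({x : V₁ // x ≠ w₁} ⊕ {x : V₂ // x ≠ w₂})) with hσ
  have hsum : ∑ z : (V₀ ⊕ ({x : V₁ // x ≠ w₁} ⊕ {x : V₂ // x ≠ w₂})) ×
        (V₀ ⊕ ({x : V₁ // x ≠ w₁} ⊕ {x : V₂ // x ≠ w₂})),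
      (Tterm (glue G₀ G₁ G₂ u v w₁ w₂) z.1 z.2 +
        Tterm (glue G₀ G₁ G₂ u v w₁ w₂) (σ z.1) (σ z.2)) <
      ∑ z : (V₀ ⊕ ({x : V₁ // x ≠ w₁} ⊕ {x : V₂ // x ≠ w₂})) ×
        (V₀ ⊕ ({x : V₁ // x ≠ w₁} ⊕ {x : V₂ // x ≠ w₂})),
      (Tterm (glue G₀ G₁ G₂ u u w₁ w₂) z.1 z.2 +
        Tterm (glue G₀ G₁ G₂ u u w₁ w₂) (σ z.1) (σ z.2)) := by
    refine Finset.sum_lt_sum (fun i _ => key i.1 i.2) ?_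
    exact ⟨(Sum.inr (Sum.inl ⟨x₁, hx₁⟩), Sum.inr (Sum.inr ⟨x₂, hx₂⟩)),
      Finset.mem_univ _, keylt⟩
  have reind : ∀ G : SimpleGraph (V₀ ⊕ ({x : V₁ // x ≠ w₁} ⊕ {x : V₂ // x ≠ w₂})),
      ∑ z : (V₀ ⊕ ({x : V₁ // x ≠ w₁} ⊕ {x : V₂ // x ≠ w₂})) ×
        (V₀ ⊕ ({x : V₁ // x ≠ w₁} ⊕ {x : V₂ // x ≠ w₂})),
        Tterm G (σ z.1) (σ z.2) =
      ∑ z : (V₀ ⊕ ({x : V₁ // x ≠ w₁} ⊕ {x : V₂ // x ≠ w₂})) ×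
        (V₀ ⊕ ({x : V₁ // x ≠ w₁} ⊕ {x : V₂ // x ≠ w₂})),
        Tterm G z.1 z.2 := by
    intro G
    exact Fintype.sum_equiv (Equiv.prodCongr σ σ) _ _ (fun z => rfl)
  rw [Finset.sum_add_distrib, Finset.sum_add_distrib, reind, reind] at hsum
  have conv : ∀ G : SimpleGraph (V₀ ⊕ ({x : V₁ // x ≠ w₁} ⊕ {x : V₂ // x ≠ w₂})),
      ∑ x, ∑ y, Tterm G x y =
      ∑ z : (V₀ ⊕ ({x : V₁ // x ≠ w₁} ⊕ {x : V₂ // x ≠ w₂})) ×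
        (V₀ ⊕ ({x : V₁ // x ≠ w₁} ⊕ {x : V₂ // x ≠ w₂})),
        Tterm G z.1 z.2 := by
    intro G
    exact (Fintype.sum_prod_type (f := fun z => Tterm G z.1 z.2)).symm
  rw [RDD_eq, RDD_eq, conv, conv]
  linarith
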